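/- For every natural number s and every real number x, as an identity of formal power series in z over ℝ: (1 − x^2 z)^{s+1} · ∑_{i ≥ 0} r_i(x) z^i = z^2 · (x + z)^{s+1}. -/

import Mathlib

open PowerSeries

/-- For a fixed `s`: `r 0 = r 1 = 0`, `r 2 = x^{s+1}`, and for `n ≥ 3`,
`r n = ∑_{j=0}^{s} C(s,j) C(n+s-j-2, s) x^{2n+s-3j-3}
     + ∑_{j=0}^{s} C(s,j) C(n+s-j-3, s) x^{2n+s-3j-6}`. -/
def rPoly (s n : ℕ) (x : ℝ) : ℝ :=
  if n = 0 ∨ n = 1 then 0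
  else if n = 2 then x ^ (s + 1)
  else
    (∑ j ∈ Finset.range (s + 1),
      (Nat.choose s j : ℝ) * (Nat.choose (n + s - j - 2) s : ℝ) * x ^ (2 * n + s - 3 * j - 3)) +
    ∑ j ∈ Finset.range (s + 1),
      (Nat.choose s j : ℝ) * (Nat.choose (n + s - j - 3) s : ℝ) * x ^ (2 * n + s - 3 * j - 6)

private noncomputable def gSer (s : ℕ) (x : ℝ) : PowerSeries ℝ :=
  PowerSeries.mk fun k => (Nat.choose (k + s) s : ℝ) * x ^ (2 * k)

private lemma gSer_inv (s : ℕ) (x : ℝ) :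
    (1 - PowerSeries.C (x ^ 2) * X) ^ (s + 1) * gSer s x = 1 := by
  have h := PowerSeries.mk_add_choose_mul_one_sub_pow_eq_one ℝ s
  have h2 := congrArg (PowerSeries.rescale (x ^ 2)) h
  rw [map_mul, map_pow, map_sub, map_one, rescale_X, rescale_mk] at h2
  have hg : gSer s x = PowerSeries.mk fun n => (x ^ 2) ^ n * ((s + n).choose s : ℝ) := by
    ext k
    rw [gSer, coeff_mk, coeff_mk, show (x ^ 2) ^ k = x ^ (2 * k) from by rw [pow_mul],
      Nat.add_comm k s]
    ring
  rw [mul_comm, hg, h2]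

private lemma coeff_rhs (s n : ℕ) (x : ℝ) :
    (PowerSeries.coeff n) ((X : PowerSeries ℝ) ^ 2 * (PowerSeries.C x + X) ^ (s + 1)
        * gSer s x) =
      ∑ k ∈ Finset.range (s + 2), (Nat.choose (s + 1) k : ℝ) *
        (x ^ (s + 1 - k) *
          (if k + 2 ≤ n then (Nat.choose (n - (k + 2) + s) s : ℝ) * x ^ (2 * (n - (k + 2)))
           else 0)) := by
  rw [show PowerSeries.C x + X = X + PowerSeries.C x from add_comm _ _, add_pow]
  rw [Finset.mul_sum, Finset.sum_mul, map_sum]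
  refine Finset.sum_congr rfl fun k hk => ?_
  have hre : (X : PowerSeries ℝ) ^ 2 * ((X : PowerSeries ℝ) ^ k * PowerSeries.C x ^ (s + 1 - k)
      * ((s + 1).choose k : PowerSeries ℝ)) * gSer s x
      = PowerSeries.C (((s + 1).choose k : ℝ) * x ^ (s + 1 - k)) * (X ^ (k + 2) * gSer s x) := by
    rw [← map_natCast (PowerSeries.C) ((s + 1).choose k), ← map_pow, map_mul]
    ring
  rw [hre, coeff_C_mul, coeff_X_pow_mul', mul_assoc]
  congr 1
  split_ifs with h
  · rw [gSer, coeff_mk]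
  · rfl

private lemma mk_rPoly_eq (s : ℕ) (x : ℝ) :
    PowerSeries.mk (fun i => rPoly s i x) =
      (X : PowerSeries ℝ) ^ 2 * (PowerSeries.C x + X) ^ (s + 1) * gSer s x := by
  ext n
  rw [coeff_mk, coeff_rhs]
  set f : ℕ → ℝ := fun k =>
    x ^ (s + 1 - k) *
      (if k + 2 ≤ n then (Nat.choose (n - (k + 2) + s) s : ℝ) * x ^ (2 * (n - (k + 2))) else 0)
    with hf
  have hsplit :
      ∑ k ∈ Finset.range (s + 2), (Nat.choose (s + 1) k : ℝ) * f k
      = (∑ k ∈ Finset.range (s + 1), (Nat.choose s k : ℝ) * f k)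
        + ∑ k ∈ Finset.range (s + 1), (Nat.choose s k : ℝ) * f (k + 1) := by
    rw [Finset.sum_range_succ' (fun k => (Nat.choose (s + 1) k : ℝ) * f k) (s + 1)]
    have e2 : ∀ k, (Nat.choose (s + 1) (k + 1) : ℝ) * f (k + 1)
        = (Nat.choose s k : ℝ) * f (k + 1) + (Nat.choose s (k + 1) : ℝ) * f (k + 1) := by
      intro k
      rw [Nat.choose_succ_succ s k]
      push_cast
      ring
    simp only [e2, Finset.sum_add_distrib]
    have e3 : ∑ k ∈ Finset.range (s + 1), (Nat.choose s (k + 1) : ℝ) * f (k + 1)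
        = (∑ k ∈ Finset.range (s + 1), (Nat.choose s k : ℝ) * f k)
          - (Nat.choose s 0 : ℝ) * f 0 := by
      have h4 := Finset.sum_range_succ' (fun k => (Nat.choose s k : ℝ) * f k) (s + 1)
      have hz : (Nat.choose s (s + 1) : ℝ) * f (s + 1) = 0 := by
        rw [Nat.choose_eq_zero_of_lt (Nat.lt_succ_self s)]; simp
      rw [Finset.sum_range_succ, hz, add_zero] at h4
      rw [h4]; ring
    rw [e3]
    simp only [Nat.choose_zero_right, Nat.cast_one]
    ring
  rw [hsplit]
  -- now case on n
  rcases n with _ | _ | _ | m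
  · -- n = 0
    rw [rPoly, if_pos (Or.inl rfl)]
    have hA : ∀ k ∈ Finset.range (s + 1), (Nat.choose s k : ℝ) * f k = 0 := by
      intro k _
      rw [hf]; simp only
      rw [if_neg (by omega), mul_zero, mul_zero]
    have hB : ∀ k ∈ Finset.range (s + 1), (Nat.choose s k : ℝ) * f (k + 1) = 0 := by
      intro k _
      rw [hf]; simp only
      rw [if_neg (by omega), mul_zero, mul_zero]
    rw [Finset.sum_eq_zero hA, Finset.sum_eq_zero hB, add_zero]
  · -- n = 1
    rw [rPoly, if_pos (Or.inr rfl)]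
    have hA : ∀ k ∈ Finset.range (s + 1), (Nat.choose s k : ℝ) * f k = 0 := by
      intro k _
      rw [hf]; simp only
      rw [if_neg (by omega), mul_zero, mul_zero]
    have hB : ∀ k ∈ Finset.range (s + 1), (Nat.choose s k : ℝ) * f (k + 1) = 0 := by
      intro k _
      rw [hf]; simp only
      rw [if_neg (by omega), mul_zero, mul_zero]
    rw [Finset.sum_eq_zero hA, Finset.sum_eq_zero hB, add_zero]
  · -- n = 2
    rw [rPoly]
    norm_num
    have hA : ∑ k ∈ Finset.range (s + 1), (Nat.choose s k : ℝ) * f k = x ^ (s + 1) := by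
      rw [Finset.sum_eq_single_of_mem 0 (Finset.mem_range.2 (by omega))]
      · rw [hf]; simp only
        rw [if_pos (by omega)]
        simp [Nat.choose_self]
      · intro k _ hk0
        rw [hf]; simp only
        rw [if_neg (by omega), mul_zero, mul_zero]
    have hB : ∀ k ∈ Finset.range (s + 1), (Nat.choose s k : ℝ) * f (k + 1) = 0 := by
      intro k _
      rw [hf]; simp only
      rw [if_neg (by omega), mul_zero, mul_zero]
    rw [hA, Finset.sum_eq_zero hB, add_zero]
  · -- n = m + 3
    rw [rPoly, if_neg (by omega), if_neg (by omega)]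
    congr 1
    · refine Finset.sum_congr rfl fun k hk => ?_
      have hks : k ≤ s := by simpa [Nat.lt_succ_iff] using Finset.mem_range.1 hk
      rw [hf]; simp only
      by_cases h : k + 2 ≤ m + 3
      · rw [if_pos h]
        rw [show m + 3 - (k + 2) + s = m + 3 + s - k - 2 from by omega]
        rw [show (2 : ℕ) * (m + 3) + s - 3 * k - 3 = (s + 1 - k) + 2 * (m + 3 - (k + 2)) from
          by omega, pow_add]
        ring
      · rw [if_neg h, mul_zero, mul_zero]
        rw [Nat.choose_eq_zero_of_lt (show m + 3 + s - k - 2 < s from by omega)]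
        simp
    · refine Finset.sum_congr rfl fun k hk => ?_
      have hks : k ≤ s := by simpa [Nat.lt_succ_iff] using Finset.mem_range.1 hk
      rw [hf]; simp only
      by_cases h : k + 1 + 2 ≤ m + 3
      · rw [if_pos h]
        rw [show m + 3 - (k + 1 + 2) + s = m + 3 + s - k - 3 from by omega]
        rw [show (2 : ℕ) * (m + 3) + s - 3 * k - 6 = (s + 1 - (k + 1)) + 2 * (m + 3 - (k + 1 + 2))
          from by omega, pow_add]
        ring
      · rw [if_neg h, mul_zero, mul_zero]
        rw [Nat.choose_eq_zero_of_lt (show m + 3 + s - k - 3 < s from by omega)]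
        simp

theorem rPoly_generating_function (s : ℕ) (x : ℝ) :
    (1 - PowerSeries.C (x ^ 2) * X) ^ (s + 1) * PowerSeries.mk (fun i => rPoly s i x) =
      (X : PowerSeries ℝ) ^ 2 * (PowerSeries.C x + X) ^ (s + 1) := by
  rw [mk_rPoly_eq s x]
  calc (1 - PowerSeries.C (x ^ 2) * X) ^ (s + 1)
        * ((X : PowerSeries ℝ) ^ 2 * (PowerSeries.C x + X) ^ (s + 1) * gSer s x)
      = (X : PowerSeries ℝ) ^ 2 * (PowerSeries.C x + X) ^ (s + 1)
        * ((1 - PowerSeries.C (x ^ 2) * X) ^ (s + 1) * gSer s x) := by ring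
    _ = _ := by rw [gSer_inv, mul_one]
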